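/- Let G be a finite group, H ◁ G normal of index 2 with coset representative r, and let D : G → GL(V) be an irreducible complex representation such that the restriction D|_H is reducible. Then V = L₁ ⊕ L₂ with L₁ an irreducible H-subspace, L₂ = D(r)L₁, and with respect to bases [Φ] of L₁ and D(r)[Φ] of L₂, the matrix of D(r) has block form [[0, d(r²)],[I, 0]], where d denotes the representation of H on L₁. -/

import Mathlib

def RepInvariant {G V : Type*} [Group G] [AddCommGroup V] [Module ℂ V]
    (ρ : Representation ℂ G V) (S : Set G) (W : Submodule ℂ V) : Prop :=
  ∀ g ∈ S, ∀ v ∈ W, ρ g v ∈ W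

def RepIrreducibleOn {G V : Type*} [Group G] [AddCommGroup V] [Module ℂ V]
    (ρ : Representation ℂ G V) (S : Set G) : Prop :=
  Nontrivial V ∧ ∀ W : Submodule ℂ V, RepInvariant ρ S W → W = ⊥ ∨ W = ⊤

/-- If `D` is irreducible on `G` but its restriction to the index-2 normal subgroup `H` is
reducible, then `V = L₁ ⊕ L₂` with `L₁` an irreducible `H`-subspace, `L₂ = D(r)L₁`, and in
the basis `[Φ, D(r)Φ]` the matrix of `D(r)` is `[[0, d(r²)],[I, 0]]`, where `d(r²)` is the
block of the matrix of `D(r²)` on `L₁`. -/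
theorem stmt1 {G V : Type*} [Group G] [Finite G] [AddCommGroup V] [Module ℂ V]
    [FiniteDimensional ℂ V]
    (H : Subgroup G) [H.Normal] (hH : H.index = 2)
    (r : G) (hr : r ∉ H)
    (ρ : Representation ℂ G V)
    (hirr : RepIrreducibleOn ρ Set.univ)
    (hred : ∃ W : Submodule ℂ V, RepInvariant ρ (H : Set G) W ∧ W ≠ ⊥ ∧ W ≠ ⊤) :
    ∃ L₁ : Submodule ℂ V,
      RepInvariant ρ (H : Set G) L₁ ∧ L₁ ≠ ⊥ ∧
      (∀ W : Submodule ℂ V, W ≤ L₁ → RepInvariant ρ (H : Set G) W → W = ⊥ ∨ W = L₁) ∧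
      IsCompl L₁ (L₁.map (ρ r)) ∧
      ∃ (m : ℕ) (b : Module.Basis (Fin m ⊕ Fin m) ℂ V),
        (∀ i : Fin m, b (Sum.inl i) ∈ L₁) ∧
        (∀ i : Fin m, b (Sum.inr i) = ρ r (b (Sum.inl i))) ∧
        LinearMap.toMatrix b b (ρ r) =
          Matrix.fromBlocks 0
            (Matrix.of fun i j =>
              LinearMap.toMatrix b b (ρ (r * r)) (Sum.inl i) (Sum.inl j))
            1 0 := by
  classical
  obtain ⟨W₀, hW₀inv, hW₀ne, hW₀top⟩ := hred
  -- pick a minimal nonzero H-invariant submodule inside W₀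
  have hwf : WellFoundedLT (Submodule ℂ V) := inferInstance
  obtain ⟨L₁, ⟨hL₁inv, hL₁ne, hL₁le⟩, hmin⟩ :=
    hwf.wf.has_min {W : Submodule ℂ V | RepInvariant ρ (H : Set G) W ∧ W ≠ ⊥ ∧ W ≤ W₀}
      ⟨W₀, hW₀inv, hW₀ne, le_rfl⟩
  have hminimal : ∀ W : Submodule ℂ V, W ≤ L₁ → RepInvariant ρ (H : Set G) W →
      W = ⊥ ∨ W = L₁ := by
    intro W hWle hWinv
    by_cases hW : W = ⊥
    · exact Or.inl hW
    · right
      have hnlt := hmin W ⟨hWinv, hW, hWle.trans hL₁le⟩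
      exact (lt_or_eq_of_le hWle).resolve_left hnlt
  have hL₁top : L₁ ≠ ⊤ := fun h => hW₀top (top_le_iff.mp (h ▸ hL₁le))
  -- ρ r as a linear equivalence
  have hcomp : ∀ g g' : G, ∀ v : V, ρ g (ρ g' v) = ρ (g * g') v := by
    intro g g' v
    rw [map_mul]
    rfl
  set e : V ≃ₗ[ℂ] V := LinearEquiv.ofLinear (ρ r) (ρ r⁻¹)
    (by ext v; simp only [LinearMap.comp_apply, LinearMap.id_apply, hcomp, mul_inv_cancel,
        map_one]; rfl)
    (by ext v; simp only [LinearMap.comp_apply, LinearMap.id_apply, hcomp, inv_mul_cancel,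
        map_one]; rfl) with he
  have heρ : (e : V →ₗ[ℂ] V) = ρ r := rfl
  set L₂ : Submodule ℂ V := L₁.map (ρ r) with hL₂
  -- L₂ is H-invariant
  have hL₂inv : RepInvariant ρ (H : Set G) L₂ := by
    intro h hh v hv
    obtain ⟨w, hw, rfl⟩ := Submodule.mem_map.mp hv
    have hconj : r⁻¹ * h * r ∈ H := by
      simpa [mul_assoc] using ‹H.Normal›.conj_mem h hh r⁻¹
    refine Submodule.mem_map.mpr ⟨ρ (r⁻¹ * h * r) w, hL₁inv _ hconj w hw, ?_⟩
    rw [hcomp, hcomp]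
    congr 1
    group
  -- the sup is G-invariant
  have hgr : ∀ g : G, g ∉ H → g * r ∈ H := by
    intro g hg
    rw [Subgroup.mul_mem_iff_of_index_two hH]
    exact iff_of_false hg hr
  have hsupinv : RepInvariant ρ Set.univ (L₁ ⊔ L₂) := by
    intro g _ v hv
    obtain ⟨x, hx, y, hy, rfl⟩ := Submodule.mem_sup.mp hv
    rw [map_add]
    apply Submodule.add_mem
    · by_cases hg : g ∈ H
      · exact Submodule.mem_sup_left (hL₁inv g hg x hx)
      · have hgr' : g * r⁻¹ ∈ H := by
          rw [Subgroup.mul_mem_iff_of_index_two hH]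
          exact iff_of_false hg (fun h => hr (by simpa using inv_mem h))
        have : ρ g x = ρ (g * r⁻¹) (ρ r x) := by rw [hcomp]; group
        rw [this]
        exact Submodule.mem_sup_right
          (hL₂inv _ hgr' _ (Submodule.mem_map.mpr ⟨x, hx, rfl⟩))
    · obtain ⟨w, hw, rfl⟩ := Submodule.mem_map.mp hy
      by_cases hg : g ∈ H
      · exact Submodule.mem_sup_right (hL₂inv g hg _ (Submodule.mem_map.mpr ⟨w, hw, rfl⟩))
      · have : ρ g (ρ r w) = ρ (g * r) w := hcomp _ _ _
        rw [this]
        exact Submodule.mem_sup_left (hL₁inv _ (hgr g hg) w hw)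
  have hsup : L₁ ⊔ L₂ = ⊤ := by
    rcases hirr.2 (L₁ ⊔ L₂) hsupinv with h | h
    · exact absurd (eq_bot_iff.mpr (le_sup_left.trans h.le)) hL₁ne
    · exact h
  -- the inf is trivial
  have hfinrank₂ : Module.finrank ℂ L₂ = Module.finrank ℂ L₁ := by
    rw [hL₂, ← heρ]
    exact LinearEquiv.finrank_map_eq e L₁
  have hinf : L₁ ⊓ L₂ = ⊥ := by
    rcases hminimal (L₁ ⊓ L₂) inf_le_left
        (fun h hh v hv => ⟨hL₁inv h hh v hv.1, hL₂inv h hh v hv.2⟩) with h | h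
    · exact h
    · exfalso
      have hle : L₁ ≤ L₂ := by rw [← h]; exact inf_le_right
      have : L₁ = L₂ := Submodule.eq_of_le_of_finrank_eq hle hfinrank₂.symm
      exact hL₁top (by rw [← hsup, ← this, sup_idem])
  have hcompl : IsCompl L₁ L₂ := ⟨disjoint_iff.mpr hinf, codisjoint_iff.mpr hsup⟩
  refine ⟨L₁, hL₁inv, hL₁ne, hminimal, hcompl, ?_⟩
  -- construct the basis
  set m := Module.finrank ℂ L₁ with hm
  set φ : Module.Basis (Fin m) ℂ L₁ := Module.finBasis ℂ L₁ with hφ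
  set v : Fin m ⊕ Fin m → V :=
    Sum.elim (fun i => (φ i : V)) (fun i => ρ r (φ i : V)) with hv
  have hspan1 : Submodule.span ℂ (Set.range fun i => ((φ i : V))) = L₁ := by
    have := congrArg (Submodule.map L₁.subtype) φ.span_eq
    rwa [Submodule.map_span, Submodule.map_top, Submodule.range_subtype,
      ← Set.range_comp] at this
  have hspan2 : Submodule.span ℂ (Set.range fun i => ρ r (φ i : V)) = L₂ := by
    have := congrArg (Submodule.map (ρ r)) hspan1
    rwa [Submodule.map_span, ← Set.range_comp] at this
  have htop : ⊤ ≤ Submodule.span ℂ (Set.range v) := by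
    rw [hv, Set.Sum.elim_range, Submodule.span_union, hspan1, hspan2, hsup]
  have hcard : Fintype.card (Fin m ⊕ Fin m) = Module.finrank ℂ V := by
    rw [Fintype.card_sum, Fintype.card_fin,
      ← Submodule.finrank_add_eq_of_isCompl hcompl, hfinrank₂]
  set b : Module.Basis (Fin m ⊕ Fin m) ℂ V := basisOfTopLeSpanOfCardEqFinrank v htop hcard with hb
  have hbv : ⇑b = v := coe_basisOfTopLeSpanOfCardEqFinrank v htop hcard
  have hbinl : ∀ i : Fin m, b (Sum.inl i) ∈ L₁ := by
    intro i; rw [hbv]; exact (φ i).2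
  have hbinr : ∀ i : Fin m, b (Sum.inr i) = ρ r (b (Sum.inl i)) := by
    intro i; rw [hbv]; rfl
  refine ⟨m, b, hbinl, hbinr, ?_⟩
  -- coordinates of elements of L₁ vanish on inr
  have hL₁span : L₁ = Submodule.span ℂ (Set.range fun i : Fin m => b (Sum.inl i)) := by
    rw [← hspan1]; congr 1; ext x; simp [hbv, hv]
  have hrepr : ∀ w ∈ L₁, ∀ i : Fin m, b.repr w (Sum.inr i) = 0 := by
    intro w hw i
    rw [hL₁span] at hw
    induction hw using Submodule.span_induction with
    | mem x hx =>
      obtain ⟨j, rfl⟩ := hx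
      rw [b.repr_self_apply]
      simp
    | zero => simp
    | add x y _ _ hx hy => rw [map_add]; simp [hx, hy]
    | smul c x _ hx => rw [map_smul]; simp [hx]
  -- compute the matrix
  ext i j
  rcases i with i | i <;> rcases j with j | j
  · rw [Matrix.fromBlocks_apply₁₁, LinearMap.toMatrix_apply, ← hbinr j, b.repr_self_apply]
    simp
  · rw [Matrix.fromBlocks_apply₁₂, Matrix.of_apply, LinearMap.toMatrix_apply,
      LinearMap.toMatrix_apply, hbinr j, hcomp]
  · rw [Matrix.fromBlocks_apply₂₁, LinearMap.toMatrix_apply, ← hbinr j, b.repr_self_apply,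
      Matrix.one_apply]
    simp [eq_comm]
  · rw [Matrix.fromBlocks_apply₂₂, LinearMap.toMatrix_apply, hbinr j, hcomp]
    exact hrepr _ (hL₁inv _ (Subgroup.mul_self_mem_of_index_two hH r) _ (hbinl j)) i
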